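/- Let N be a binary unrooted phylogenetic network on X containing a bad pendant blob with three leaves a_1,a_2,a_3 attached consecutively along one side, and let N' be obtained by deleting the leaf a_2 (and suppressing the resulting degree-2 vertex). Then d^{N'}_m(x,y) = d^N_m(x,y) for all leaf pairs {x,y} ⊆ X − {a_2} with {x,y} ≠ {a_1,a_3}, and d^{N'}_m(a_1,a_3) = 3. -/

import Mathlib

open SimpleGraph

/-- The degree of a vertex (defined without decidability assumptions). -/
noncomputable def gdeg {V : Type} (G : SimpleGraph V) (v : V) : ℕ :=
  {u | G.Adj v u}.ncard

/-- The longest distance between two vertices: the supremum of the lengths of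
paths between them. -/
noncomputable def ldistV {V : Type} (G : SimpleGraph V) (u v : V) : ℕ :=
  sSup {n | ∃ p : G.Walk u v, p.IsPath ∧ p.length = n}

/-- A binary unrooted phylogenetic network on the leaf-label set `X`:
a simple connected graph whose degree-1 vertices (the leaves) are bijectively
labelled by `X`, every other vertex having degree 3, with at least two leaves. -/
structure PhyloNet (V X : Type) where
  G : SimpleGraph V
  conn : G.Connected
  leaf : X → V
  leafInj : Function.Injective leaf
  leafDeg : ∀ x : X, gdeg G (leaf x) = 1
  internalDeg : ∀ v : V, v ∉ Set.range leaf → gdeg G v = 3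
  leafSurj : ∀ v : V, gdeg G v = 1 → v ∈ Set.range leaf
  twoLeaves : Nontrivial X

namespace PhyloNet

variable {V W X : Type}

/-- Shortest distance between two leaves. -/
noncomputable def dm (N : PhyloNet V X) (x y : X) : ℕ :=
  N.G.dist (N.leaf x) (N.leaf y)

/-- Longest distance between two leaves. -/
noncomputable def dl (N : PhyloNet V X) (x y : X) : ℕ :=
  ldistV N.G (N.leaf x) (N.leaf y)

/-- Two networks on the same label set realize the same shortest distance matrix. -/
def SameDist (N : PhyloNet V X) (M : PhyloNet W X) : Prop :=
  ∀ x y : X, N.dm x y = M.dm x y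

/-- Two networks realize the same longest distance matrix. -/
def SameLDist (N : PhyloNet V X) (M : PhyloNet W X) : Prop :=
  ∀ x y : X, N.dl x y = M.dl x y

/-- Label-preserving isomorphism of networks. -/
def Isom (N : PhyloNet V X) (M : PhyloNet W X) : Prop :=
  ∃ φ : N.G ≃g M.G, ∀ x : X, φ (N.leaf x) = M.leaf x

/-- `N` is reconstructible from its shortest distance matrix. -/
def Reconstructible (N : PhyloNet V X) : Prop :=
  ∀ (W : Type) (M : PhyloNet W X), N.SameDist M → N.Isom M

/-- Two leaves form a cherry: they share a common neighbour. -/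
def Cherry (N : PhyloNet V X) (x y : X) : Prop :=
  x ≠ y ∧ ∃ v : V, N.G.Adj (N.leaf x) v ∧ N.G.Adj (N.leaf y) v

def NoCherry (N : PhyloNet V X) : Prop := ∀ x y : X, ¬ N.Cherry x y

/-- `uv` is a cut-edge. -/
def IsCutEdge (N : PhyloNet V X) (u v : V) : Prop :=
  N.G.Adj u v ∧ ¬ (N.G.deleteEdges {s(u, v)}).Reachable u v

/-- Leaf `x` lies on the `u`-side of the cut-edge `uv`. -/
def leafSide (N : PhyloNet V X) (u v : V) (x : X) : Prop :=
  (N.G.deleteEdges {s(u, v)}).Reachable (N.leaf x) u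

/-- `A` is a part of a cut-edge induced split of `N`. -/
def IsSplitPart (N : PhyloNet V X) (A : Set X) : Prop :=
  ∃ u v : V, N.IsCutEdge u v ∧ ∀ x : X, N.leafSide u v x ↔ x ∈ A

/-- Every cut-edge of `N` induces a unique split. -/
def UniqueSplits (N : PhyloNet V X) : Prop :=
  ∀ u v u' v' : V, N.IsCutEdge u v → N.IsCutEdge u' v' →
    ((∀ x : X, N.leafSide u v x ↔ N.leafSide u' v' x) ∨
      (∀ x : X, N.leafSide u v x ↔ N.leafSide v' u' x)) →
    s(u, v) = s(u', v')

/-- `l` is a chain of leaves: the neighbours of its members form a path. -/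
def IsChain (N : PhyloNet V X) (l : List X) : Prop :=
  l ≠ [] ∧ ∃ vs : List V, ∃ h : vs.length = l.length,
    vs.Nodup ∧ List.Chain' N.G.Adj vs ∧
    ∀ (i : ℕ) (hi : i < l.length),
      N.G.Adj (N.leaf (l.get ⟨i, hi⟩)) (vs.get ⟨i, by omega⟩)

/-- A maximal chain: not a subsequence of any other chain. -/
def MaxChain (N : PhyloNet V X) (l : List X) : Prop :=
  N.IsChain l ∧ ∀ m : List X, N.IsChain m → l.Sublist m → m = l

end PhyloNet

/-- A set of at least three vertices is 2-connected if it induces a connected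
graph that stays connected after removal of any single vertex. -/
def TwoConn {V : Type} (G : SimpleGraph V) (B : Set V) : Prop :=
  3 ≤ B.ncard ∧ (G.induce B).Connected ∧
    ∀ v ∈ B, (G.induce (B \ {v})).Connected

/-- A blob: a maximal 2-connected set of vertices (with at least three vertices). -/
def IsBlob {V : Type} (G : SimpleGraph V) (B : Set V) : Prop :=
  TwoConn G B ∧ ∀ C : Set V, TwoConn G C → B ⊆ C → C = B

/-- Number of edges with both endpoints in `B`. -/
noncomputable def edgesIn {V : Type} (G : SimpleGraph V) (B : Set V) : ℕ :=
  {e : Sym2 V | e ∈ G.edgeSet ∧ ∀ v ∈ e, v ∈ B}.ncard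

/-- `G` is a level-(≤ k) network: every blob has cycle rank at most `k`,
i.e. removing at most `k` edges from each blob yields a tree. -/
def LevelLE {V : Type} (G : SimpleGraph V) (k : ℕ) : Prop :=
  ∀ B : Set V, IsBlob G B → edgesIn G B ≤ (B.ncard - 1) + k

namespace PhyloNet

variable {V X : Type}

/-- A trivial cut-edge is one incident to a leaf. -/
def TrivialCutEdge (N : PhyloNet V X) (u v : V) : Prop :=
  u ∈ Set.range N.leaf ∨ v ∈ Set.range N.leaf

/-- A pendant blob: a blob incident to exactly one non-trivial cut-edge. -/
def IsPendantBlob (N : PhyloNet V X) (B : Set V) : Prop :=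
  IsBlob N.G B ∧
    ∃! e : Sym2 V, ∃ u v : V, e = s(u, v) ∧ u ∈ B ∧ v ∉ B ∧
      N.G.Adj u v ∧ ¬ N.TrivialCutEdge u v

/-- The leaves attached to (contained in) a blob. -/
def blobLeaves (N : PhyloNet V X) (B : Set V) : Set X :=
  {x : X | ∃ u ∈ B, N.G.Adj (N.leaf x) u}

/-- `N` has a leaf on each generator side: every vertex is within shortest
distance 2 of some leaf. -/
def LeafOnEachGenSide (N : PhyloNet V X) : Prop :=
  ∀ v : V, ∃ x : X, N.G.dist v (N.leaf x) ≤ 2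

end PhyloNet

lemma uniq_nbr {V : Type} {G : SimpleGraph V} {v a b : V} (h : gdeg G v = 1)
    (ha : G.Adj v a) (hb : G.Adj v b) : a = b := by
  obtain ⟨c, hc⟩ := Set.ncard_eq_one.mp h
  have h1 : a ∈ {u | G.Adj v u} := ha
  have h2 : b ∈ {u | G.Adj v u} := hb
  rw [hc] at h1 h2
  simp only [Set.mem_singleton_iff] at h1 h2
  rw [h1, h2]

lemma dist_ge_three {V : Type} {G : SimpleGraph V} {u v : V} (hr : G.Reachable u v)
    (hne : u ≠ v) (hadj : ¬ G.Adj u v) (hcom : ∀ t, G.Adj u t → ¬ G.Adj t v) :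
    3 ≤ G.dist u v := by
  by_contra hlt
  obtain ⟨p, hp⟩ := hr.exists_walk_length_eq_dist
  match p, hp with
  | .nil, hp => exact hne rfl
  | .cons h .nil, hp => exact hadj h
  | .cons h (.cons h' r), hp =>
    push_neg at hlt
    have hr0 : r.length = 0 := by
      simp only [Walk.length_cons] at hp; omega
    have := Walk.eq_of_length_eq_zero hr0
    subst this
    exact hcom _ h h'

lemma dart_snd_mem_tail {V : Type} {G : SimpleGraph V} {u v : V} {p : G.Walk u v}
    {d : G.Dart} (hd : d ∈ p.darts) : d.snd ∈ p.support.tail := by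
  rw [← Walk.map_snd_darts]
  exact List.mem_map_of_mem hd

lemma dart_start {V : Type} {G : SimpleGraph V} {u b v : V} (h : G.Adj u b)
    (q : G.Walk b v) (hp : (Walk.cons h q).IsPath) {d : G.Dart}
    (hd : d ∈ (Walk.cons h q).darts) (hfst : d.fst = u) : d.snd = b := by
  rw [Walk.darts_cons, List.mem_cons] at hd
  rcases hd with rfl | hd
  · rfl
  · exfalso
    have : d.fst ∈ q.support := Walk.dart_fst_mem_support_of_mem_darts q hd
    rw [hfst] at this
    exact ((Walk.cons_isPath_iff h q).mp hp).2 this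

lemma lift_walk {V : Type} {S : Set V} {G : SimpleGraph V} {G' : SimpleGraph ↥S}
    (hGG : ∀ p q : ↥S, G.Adj p.1 q.1 → G'.Adj p q) :
    ∀ {u z : V} (p : G.Walk u z) (u' z' : ↥S), u'.1 = u → z'.1 = z →
      (∀ s ∈ p.support, s ∈ S) → ∃ q : G'.Walk u' z', q.length = p.length := by
  intro u z p
  induction p with
  | nil =>
    intro u' z' hu hz _
    have : u' = z' := Subtype.ext (by rw [hu, hz])
    subst this
    exact ⟨Walk.nil, rfl⟩
  | @cons u b z h p ih =>
    intro u' z' hu hz hs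
    have hbS : b ∈ S := hs b (by simp)
    obtain ⟨q, hq⟩ := ih ⟨b, hbS⟩ z' rfl hz (fun s hs' => hs s (by simp [hs']))
    exact ⟨Walk.cons (hGG u' ⟨b, hbS⟩ (by rw [hu]; exact h)) q, by simp [hq]⟩

lemma proj_walk {V : Type} {S : Set V} {G : SimpleGraph V} {G' : SimpleGraph ↥S} :
    ∀ {u z : ↥S} (p : G'.Walk u z), (∀ d ∈ p.darts, G.Adj d.fst.1 d.snd.1) →
      ∃ q : G.Walk u.1 z.1, q.length = p.length := by
  intro u z p
  induction p with
  | nil => exact fun _ => ⟨Walk.nil, rfl⟩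
  | @cons u b z h p ih =>
    intro hd
    obtain ⟨q, hq⟩ := ih (fun d hdm => hd d (by simp [hdm]))
    exact ⟨Walk.cons (hd ⟨(u, b), h⟩ (by simp)) q, by simp [hq]⟩

/-- distances after deleting the middle leaf `a2` of a bad
pendant level-1 blob (a cycle `w v1 v2 v3` carrying the chain `(a1,a2,a3)`)
and suppressing the resulting degree-2 vertex `v2` (adding the edge `v1 v3`). -/
theorem bad_blob_delete_middle_leaf {V X : Type} (N : PhyloNet V X)
    (a1 a2 a3 : X) (v1 v2 v3 w : V)
    (ha12 : a1 ≠ a2) (ha13 : a1 ≠ a3) (ha23 : a2 ≠ a3)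
    (hv12 : v1 ≠ v2) (hv13 : v1 ≠ v3) (hv23 : v2 ≠ v3)
    (hv1w : v1 ≠ w) (hv2w : v2 ≠ w) (hv3w : v3 ≠ w)
    (hwv1 : N.G.Adj w v1) (hv1v2 : N.G.Adj v1 v2)
    (hv2v3 : N.G.Adj v2 v3) (hv3w' : N.G.Adj v3 w)
    (hl1 : N.G.Adj (N.leaf a1) v1) (hl2 : N.G.Adj (N.leaf a2) v2)
    (hl3 : N.G.Adj (N.leaf a3) v3)
    (hc1 : ∀ u : V, N.G.Adj v1 u → u = w ∨ u = v2 ∨ u = N.leaf a1)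
    (hc2 : ∀ u : V, N.G.Adj v2 u → u = v1 ∨ u = v3 ∨ u = N.leaf a2)
    (hc3 : ∀ u : V, N.G.Adj v3 u → u = v2 ∨ u = w ∨ u = N.leaf a3)
    (hnt : ∃ t : V, N.G.Adj w t ∧ t ≠ v1 ∧ t ≠ v3 ∧ t ∉ Set.range N.leaf)
    (N' : PhyloNet (↥{p : V | p ≠ N.leaf a2 ∧ p ≠ v2}) {b : X // b ≠ a2})
    (hAdj : ∀ p q : ↥{p : V | p ≠ N.leaf a2 ∧ p ≠ v2},
      N'.G.Adj p q ↔ (N.G.Adj p.1 q.1 ∨ (p.1 = v1 ∧ q.1 = v3) ∨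
        (p.1 = v3 ∧ q.1 = v1)))
    (hleaf' : ∀ b : {b : X // b ≠ a2}, (N'.leaf b : V) = N.leaf b.1) :
    (∀ p q : {b : X // b ≠ a2},
      ¬ (p.1 = a1 ∧ q.1 = a3) → ¬ (p.1 = a3 ∧ q.1 = a1) →
        N'.dm p q = N.dm p.1 q.1) ∧
    (∀ p q : {b : X // b ≠ a2}, p.1 = a1 → q.1 = a3 → N'.dm p q = 3) := by
  classical
  have nb1 : ∀ u : V, N.G.Adj (N.leaf a1) u → u = v1 := fun u h => uniq_nbr (N.leafDeg a1) h hl1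
  have nb2 : ∀ u : V, N.G.Adj (N.leaf a2) u → u = v2 := fun u h => uniq_nbr (N.leafDeg a2) h hl2
  have nb3 : ∀ u : V, N.G.Adj (N.leaf a3) u → u = v3 := fun u h => uniq_nbr (N.leafDeg a3) h hl3
  have notleaf : ∀ (v a b : V), N.G.Adj v a → N.G.Adj v b → a ≠ b → ∀ x : X, N.leaf x ≠ v :=
    fun v a b ha hb hab x h => hab (uniq_nbr (h ▸ N.leafDeg x) ha hb)
  have nlv1 : ∀ x, N.leaf x ≠ v1 := notleaf v1 w v2 hwv1.symm hv1v2 (Ne.symm hv2w)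
  have nlv2 : ∀ x, N.leaf x ≠ v2 := notleaf v2 v1 v3 hv1v2.symm hv2v3 hv13
  have nlv3 : ∀ x, N.leaf x ≠ v3 := notleaf v3 v2 w hv2v3.symm hv3w' hv2w
  have nlw : ∀ x, N.leaf x ≠ w := notleaf w v1 v3 hwv1 hv3w'.symm hv13
  have hv1S : v1 ∈ {p : V | p ≠ N.leaf a2 ∧ p ≠ v2} := ⟨Ne.symm (nlv1 a2), hv12⟩
  have hv3S : v3 ∈ {p : V | p ≠ N.leaf a2 ∧ p ≠ v2} := ⟨Ne.symm (nlv3 a2), Ne.symm hv23⟩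
  set V1 : ↥{p : V | p ≠ N.leaf a2 ∧ p ≠ v2} := ⟨v1, hv1S⟩ with hV1def
  set V3 : ↥{p : V | p ≠ N.leaf a2 ∧ p ≠ v2} := ⟨v3, hv3S⟩ with hV3def
  have hlift : ∀ p q : ↥{p : V | p ≠ N.leaf a2 ∧ p ≠ v2}, N.G.Adj p.1 q.1 → N'.G.Adj p q :=
    fun p q h => (hAdj p q).mpr (Or.inl h)
  have adj' : ∀ p q : ↥{p : V | p ≠ N.leaf a2 ∧ p ≠ v2}, N'.G.Adj p q →
      N.G.Adj p.1 q.1 ∨ (p.1 = v1 ∧ q.1 = v3) ∨ (p.1 = v3 ∧ q.1 = v1) :=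
    fun p q h => (hAdj p q).mp h
  have hleafval : ∀ (x : X) (hx : x ≠ a2), ((N'.leaf ⟨x, hx⟩) : V) = N.leaf x :=
    fun x hx => hleaf' ⟨x, hx⟩
  -- N'-neighbours of the leaf a1 / a3
  have nb1' : ∀ q z : ↥{p : V | p ≠ N.leaf a2 ∧ p ≠ v2}, q.1 = N.leaf a1 → N'.G.Adj q z → z = V1 := by
    intro q z hq h
    rcases adj' q z h with h | ⟨h1, _⟩ | ⟨h1, _⟩
    · exact Subtype.ext (nb1 z.1 (hq ▸ h))
    · exact absurd (hq.symm.trans h1) (nlv1 a1)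
    · exact absurd (hq.symm.trans h1) (nlv3 a1)
  have nb3' : ∀ q z : ↥{p : V | p ≠ N.leaf a2 ∧ p ≠ v2}, q.1 = N.leaf a3 → N'.G.Adj q z → z = V3 := by
    intro q z hq h
    rcases adj' q z h with h | ⟨h1, _⟩ | ⟨h1, _⟩
    · exact Subtype.ext (nb3 z.1 (hq ▸ h))
    · exact absurd (hq.symm.trans h1) (nlv1 a3)
    · exact absurd (hq.symm.trans h1) (nlv3 a3)
  have surgery : ∀ (x y : X) (hx : x ≠ a2) (hy : y ≠ a2), ¬(x = a1 ∧ y = a3) →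
      ∀ q : N'.G.Walk (N'.leaf ⟨x, hx⟩) (N'.leaf ⟨y, hy⟩), q.IsPath →
      ∀ d : N'.G.Dart, d ∈ q.darts → d.fst = V1 → d.snd = V3 →
      ∃ q' : N'.G.Walk (N'.leaf ⟨x, hx⟩) (N'.leaf ⟨y, hy⟩), q'.length < q.length := by
    intro x y hx hy hxy q hqp d hd hdf hds
    have hV3q : V3 ∈ q.support := by
      have := q.dart_snd_mem_support_of_mem_darts hd
      rwa [hds] at this
    have hspec : (q.takeUntil V3 hV3q).append (q.dropUntil V3 hV3q) = q := q.take_spec hV3q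
    set q₁ := q.takeUntil V3 hV3q with hq₁def
    set q₂ := q.dropUntil V3 hV3q with hq₂def
    have hq₁p : q₁.IsPath := hqp.takeUntil _
    have hq₂p : q₂.IsPath := hqp.dropUntil _
    have hnd : q.support.Nodup := hqp.support_nodup
    have hdis : List.Disjoint q₁.support q₂.support.tail := by
      rw [← hspec, Walk.support_append] at hnd
      exact List.disjoint_of_nodup_append hnd
    have hlen : q.length = q₁.length + q₂.length := by
      rw [← hspec, Walk.length_append]
    have hdq₁ : d ∈ q₁.darts := by
      have hmem : d ∈ q₁.darts ++ q₂.darts := by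
        rw [← Walk.darts_append, hspec]; exact hd
      rcases List.mem_append.mp hmem with h | h
      · exact h
      · exfalso
        have h2 := dart_snd_mem_tail h
        rw [hds] at h2
        have hnd₂ : q₂.support.Nodup := hq₂p.support_nodup
        rw [q₂.support_eq_cons] at hnd₂
        exact (List.nodup_cons.mp hnd₂).1 h2
    have hV1q₁ : V1 ∈ q₁.support := by
      have := Walk.dart_fst_mem_support_of_mem_darts q₁ hdq₁
      rwa [hdf] at this
    have hV3x : V3 ≠ N'.leaf ⟨x, hx⟩ := by
      intro h
      exact nlv3 x (by rw [← hleafval x hx, ← h])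
    obtain ⟨c, hc, r₁, hr⟩ := Walk.exists_eq_cons_of_ne hV3x q₁.reverse
    have hrp : q₁.reverse.IsPath := hq₁p.reverse
    rw [hr] at hrp
    have hdsymm : d.symm ∈ q₁.reverse.darts := Walk.mem_darts_reverse.mpr (by simpa using hdq₁)
    rw [hr] at hdsymm
    have hcV1 : c = V1 := by
      have h1 : d.symm.snd = c := dart_start hc r₁ hrp hdsymm (by simpa [SimpleGraph.Dart.symm] using hds)
      have h2 : d.symm.snd = d.fst := rfl
      rw [← h1, h2, hdf]
    subst hcV1
    have hV1x : V1 ≠ N'.leaf ⟨x, hx⟩ := by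
      intro h
      exact nlv1 x (by rw [← hleafval x hx, ← h])
    obtain ⟨t, hct, r₂, hr₁⟩ := Walk.exists_eq_cons_of_ne hV1x r₁
    have hV3r₁ : V3 ∉ r₁.support := ((Walk.cons_isPath_iff hc r₁).mp hrp).2
    have hr₁p : r₁.IsPath := ((Walk.cons_isPath_iff hc r₁).mp hrp).1
    rw [hr₁] at hr₁p
    have htmem : t ∈ r₁.support := by
      rw [hr₁, Walk.support_cons]
      exact List.mem_cons_of_mem _ r₂.start_mem_support
    have ht : t.1 = w ∨ t.1 = N.leaf a1 := by
      rcases adj' V1 t hct with h | ⟨h1, h2⟩ | ⟨h1, h2⟩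
      · rcases hc1 t.1 h with h' | h' | h'
        · exact Or.inl h'
        · exact absurd h' t.2.2
        · exact Or.inr h'
      · exfalso
        have : t = V3 := Subtype.ext h2
        rw [this] at htmem
        exact hV3r₁ htmem
      · exact absurd h1 hv13
    -- the q₂ side
    have hV3y : V3 ≠ N'.leaf ⟨y, hy⟩ := by
      intro h
      exact nlv3 y (by rw [← hleafval y hy, ← h])
    obtain ⟨s, hcs, q₂', hq₂'⟩ := Walk.exists_eq_cons_of_ne hV3y q₂
    have hsmem : s ∈ q₂.support.tail := by
      rw [hq₂', Walk.support_cons]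
      exact q₂'.start_mem_support
    have hs : s.1 = w ∨ s.1 = N.leaf a3 := by
      rcases adj' V3 s hcs with h | ⟨h1, h2⟩ | ⟨h1, h2⟩
      · rcases hc3 s.1 h with h' | h' | h'
        · exact absurd h' s.2.2
        · exact Or.inl h'
        · exact Or.inr h'
      · exact absurd h1 hv13.symm
      · exfalso
        have : s = V1 := Subtype.ext h2
        rw [this] at hsmem
        exact hdis hV1q₁ hsmem
    have hlq₁ : q₁.length = r₂.length + 2 := by
      have := congrArg Walk.length hr
      rw [hr₁] at this
      simpa [Walk.length_reverse] using this
    have hlq₂ : q₂.length = q₂'.length + 1 := by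
      rw [hq₂']; simp
    rcases ht with htw | hta1
    · -- t is w : shortcut t — V3
      have hadjtV3 : N'.G.Adj t V3 := hlift t V3 (by rw [htw]; exact hv3w'.symm)
      have hr₂e : r₂.reverse.reverse = r₂ := Walk.reverse_reverse r₂
      refine ⟨(r₂.reverse).append (Walk.cons hadjtV3 q₂), ?_⟩
      rw [Walk.length_append, Walk.length_reverse, Walk.length_cons]
      omega
    · -- t is the leaf a1, so x = a1
      have hxa1 : x = a1 := by
        by_contra hne
        have htx : t ≠ N'.leaf ⟨x, hx⟩ := by
          intro h
          apply hne
          apply N.leafInj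
          rw [← hta1, ← hleafval x hx, h]
        obtain ⟨z, hcz, r₃, hr₂⟩ := Walk.exists_eq_cons_of_ne htx r₂
        have hzV1 : z = V1 := nb1' t z hta1 hcz
        have hV1r₂ : V1 ∉ r₂.support := ((Walk.cons_isPath_iff hct r₂).mp hr₁p).2
        apply hV1r₂
        rw [hr₂, Walk.support_cons, ← hzV1]
        exact List.mem_cons_of_mem _ r₃.start_mem_support
      rcases hs with hsw | hsa3
      · -- s is w : shortcut V1 — s
        have hadjV1s : N'.G.Adj V1 s := hlift V1 s (by rw [hsw]; exact hwv1.symm)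
        refine ⟨(r₁.reverse).append (Walk.cons hadjV1s q₂'), ?_⟩
        rw [Walk.length_append, Walk.length_reverse, Walk.length_cons]
        have : r₁.length = r₂.length + 1 := by rw [hr₁]; simp
        omega
      · -- s is leaf a3, so y = a3 : contradiction
        exfalso
        have hya3 : y = a3 := by
          by_contra hne
          have hsy : s ≠ N'.leaf ⟨y, hy⟩ := by
            intro h
            apply hne
            apply N.leafInj
            rw [← hsa3, ← hleafval y hy, h]
          obtain ⟨z, hcz, q₃, hq₃⟩ := Walk.exists_eq_cons_of_ne hsy q₂'
          have hzV3 : z = V3 := nb3' s z hsa3 hcz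
          have hV3q₂' : V3 ∉ q₂'.support := by
            have := hq₂p
            rw [hq₂'] at this
            exact ((Walk.cons_isPath_iff hcs q₂').mp this).2
          apply hV3q₂'
          rw [hq₃, Walk.support_cons, ← hzV3]
          exact List.mem_cons_of_mem _ q₃.start_mem_support
        exact hxy ⟨hxa1, hya3⟩
  have keyB : ∀ (x y : X) (hx : x ≠ a2) (hy : y ≠ a2), ¬(x = a1 ∧ y = a3) → ¬(x = a3 ∧ y = a1) →
      N.G.dist (N.leaf x) (N.leaf y) ≤ N'.G.dist (N'.leaf ⟨x, hx⟩) (N'.leaf ⟨y, hy⟩) := by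
    intro x y hx hy h13 h31
    obtain ⟨q, hqp, hqlen⟩ := N'.conn.exists_path_of_dist (N'.leaf ⟨x, hx⟩) (N'.leaf ⟨y, hy⟩)
    by_cases hall : ∀ d ∈ q.darts, N.G.Adj d.fst.1 d.snd.1
    · obtain ⟨p, hp⟩ := proj_walk q hall
      have := dist_le (p.copy (hleafval x hx) (hleafval y hy))
      rwa [Walk.length_copy, hp, hqlen] at this
    · push_neg at hall
      obtain ⟨d, hd, hnadj⟩ := hall
      have hsp : (d.fst = V1 ∧ d.snd = V3) ∨ (d.fst = V3 ∧ d.snd = V1) := by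
        rcases adj' _ _ d.adj with h | h | h
        · exact absurd h hnadj
        · exact Or.inl ⟨Subtype.ext h.1, Subtype.ext h.2⟩
        · exact Or.inr ⟨Subtype.ext h.1, Subtype.ext h.2⟩
      exfalso
      rcases hsp with ⟨h1, h2⟩ | ⟨h1, h2⟩
      · obtain ⟨q', hq'⟩ := surgery x y hx hy h13 q hqp d hd h1 h2
        have := dist_le q'
        omega
      · obtain ⟨q', hq'⟩ := surgery y x hy hx (fun h => h31 ⟨h.2, h.1⟩) q.reverse hqp.reverse
          d.symm (Walk.mem_darts_reverse.mpr (by simpa using hd)) (by simpa using h2)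
          (by simpa using h1)
        have := dist_le q'.reverse
        rw [Walk.length_reverse] at this
        rw [Walk.length_reverse] at hq'
        omega
  have keyA : ∀ (x y : X) (hx : x ≠ a2) (hy : y ≠ a2),
      N'.G.dist (N'.leaf ⟨x, hx⟩) (N'.leaf ⟨y, hy⟩) ≤ N.G.dist (N.leaf x) (N.leaf y) := by
    intro x y hx hy
    obtain ⟨p, hpp, hplen⟩ := N.conn.exists_path_of_dist (N.leaf x) (N.leaf y)
    have ha2sup : N.leaf a2 ∉ p.support := by
      intro hmem
      have hsp := p.take_spec hmem
      have hnd : p.support.Nodup := hpp.support_nodup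
      rw [← hsp, Walk.support_append] at hnd
      have hdis := List.disjoint_of_nodup_append hnd
      have h1 : N.leaf a2 ≠ N.leaf y := fun h => hy (N.leafInj h).symm
      obtain ⟨s, hcs, p₂', h₂⟩ := Walk.exists_eq_cons_of_ne h1 (p.dropUntil _ hmem)
      have hsv2 : s = v2 := nb2 s hcs
      have h0 : N.leaf a2 ≠ N.leaf x := fun h => hx (N.leafInj h).symm
      obtain ⟨t, hct, r, h₁⟩ := Walk.exists_eq_cons_of_ne h0 (p.takeUntil _ hmem).reverse
      have htv2 : t = v2 := nb2 t hct
      have hm1 : v2 ∈ (p.takeUntil _ hmem).support := by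
        have : t ∈ (p.takeUntil _ hmem).reverse.support := by
          rw [h₁, Walk.support_cons]
          exact List.mem_cons_of_mem _ r.start_mem_support
        rw [Walk.support_reverse, List.mem_reverse] at this
        rwa [htv2] at this
      have hm2 : v2 ∈ (p.dropUntil _ hmem).support.tail := by
        rw [h₂, Walk.support_cons]
        rw [← hsv2]
        exact p₂'.start_mem_support
      exact hdis hm1 hm2
    by_cases hv2sup : v2 ∈ p.support
    · -- shortcut construction
      have hsp := p.take_spec hv2sup
      have hnd : ((p.takeUntil _ hv2sup).append (p.dropUntil _ hv2sup)).support.Nodup := by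
        rw [hsp]; exact hpp.support_nodup
      rw [Walk.support_append] at hnd
      have hdis := List.disjoint_of_nodup_append hnd
      have hlenp : (p.takeUntil _ hv2sup).length + (p.dropUntil _ hv2sup).length = p.length := by
        rw [← Walk.length_append, hsp]
      have h1 : v2 ≠ N.leaf y := Ne.symm (nlv2 y)
      obtain ⟨s, hcs, p₂', h₂⟩ := Walk.exists_eq_cons_of_ne h1 (p.dropUntil _ hv2sup)
      have h0 : v2 ≠ N.leaf x := Ne.symm (nlv2 x)
      obtain ⟨t, hct, r, h₁⟩ := Walk.exists_eq_cons_of_ne h0 (p.takeUntil _ hv2sup).reverse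
      have hsm : s ∈ (p.dropUntil _ hv2sup).support.tail := by
        rw [h₂, Walk.support_cons]
        exact p₂'.start_mem_support
      have htm : t ∈ (p.takeUntil _ hv2sup).support := by
        have : t ∈ (p.takeUntil _ hv2sup).reverse.support := by
          rw [h₁, Walk.support_cons]
          exact List.mem_cons_of_mem _ r.start_mem_support
        rwa [Walk.support_reverse, List.mem_reverse] at this
      have hts : t ≠ s := fun h => hdis htm (h ▸ hsm)
      have hssup : s ∈ p.support := by
        have := Walk.support_dropUntil_subset p hv2sup
        exact this (List.mem_of_mem_tail hsm)
      have htsup : t ∈ p.support := (Walk.support_takeUntil_subset p hv2sup) htm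
      have hsv : s = v1 ∨ s = v3 := by
        rcases hc2 s hcs with h | h | h
        · exact Or.inl h
        · exact Or.inr h
        · exact absurd (h ▸ hssup) ha2sup
      have htv : t = v1 ∨ t = v3 := by
        rcases hc2 t hct with h | h | h
        · exact Or.inl h
        · exact Or.inr h
        · exact absurd (h ▸ htsup) ha2sup
      -- memberships in S
      have htS : t ∈ {p : V | p ≠ N.leaf a2 ∧ p ≠ v2} := by
        rcases htv with h | h
        · rw [h]; exact hv1S
        · rw [h]; exact hv3S
      have hsS : s ∈ {p : V | p ≠ N.leaf a2 ∧ p ≠ v2} := by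
        rcases hsv with h | h
        · rw [h]; exact hv1S
        · rw [h]; exact hv3S
      have hadjTS : N'.G.Adj ⟨t, htS⟩ ⟨s, hsS⟩ := by
        apply (hAdj _ _).mpr
        rcases htv with h | h <;> rcases hsv with h' | h'
        · exact absurd (h.trans h'.symm) hts
        · exact Or.inr (Or.inl ⟨h, h'⟩)
        · exact Or.inr (Or.inr ⟨h, h'⟩)
        · exact absurd (h.trans h'.symm) hts
      -- lift the two outer pieces
      have hrp : r.IsPath ∧ v2 ∉ r.support := by
        have h := hpp.takeUntil hv2sup |>.reverse
        rw [h₁] at h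
        exact ⟨((Walk.cons_isPath_iff hct r).mp h).1, ((Walk.cons_isPath_iff hct r).mp h).2⟩
      have hp₂p : p₂'.IsPath ∧ v2 ∉ p₂'.support := by
        have h := hpp.dropUntil hv2sup
        rw [h₂] at h
        exact ⟨((Walk.cons_isPath_iff hcs p₂').mp h).1, ((Walk.cons_isPath_iff hcs p₂').mp h).2⟩
      have hrS : ∀ z ∈ r.support, z ∈ {p : V | p ≠ N.leaf a2 ∧ p ≠ v2} := by
        intro z hz
        constructor
        · intro h
          apply ha2sup
          apply Walk.support_takeUntil_subset p hv2sup
          have : z ∈ (p.takeUntil _ hv2sup).reverse.support := by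
            rw [h₁, Walk.support_cons]
            exact List.mem_cons_of_mem _ hz
          rw [Walk.support_reverse, List.mem_reverse] at this
          rwa [h] at this
        · intro h
          exact hrp.2 (h ▸ hz)
      have hp₂S : ∀ z ∈ p₂'.support, z ∈ {p : V | p ≠ N.leaf a2 ∧ p ≠ v2} := by
        intro z hz
        constructor
        · intro h
          apply ha2sup
          apply Walk.support_dropUntil_subset p hv2sup
          rw [h₂, Walk.support_cons]
          rw [← h]
          exact List.mem_cons_of_mem _ hz
        · intro h
          exact hp₂p.2 (h ▸ hz)
      obtain ⟨qL, hqL⟩ := lift_walk hlift r.reverse (N'.leaf ⟨x, hx⟩) ⟨t, htS⟩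
        (hleafval x hx) rfl (by intro z hz; rw [Walk.support_reverse, List.mem_reverse] at hz; exact hrS z hz)
      obtain ⟨qR, hqR⟩ := lift_walk hlift p₂' ⟨s, hsS⟩ (N'.leaf ⟨y, hy⟩) rfl
        (hleafval y hy) hp₂S
      have hfin := dist_le (qL.append (Walk.cons hadjTS qR))
      rw [Walk.length_append, Walk.length_cons] at hfin
      rw [Walk.length_reverse] at hqL
      have hl1' : (p.takeUntil _ hv2sup).length = r.length + 1 := by
        have := congrArg Walk.length h₁
        simpa [Walk.length_reverse] using this
      have hl2' : (p.dropUntil _ hv2sup).length = p₂'.length + 1 := by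
        rw [h₂]; simp
      omega
    · -- lift the whole path
      have hSall : ∀ z ∈ p.support, z ∈ {p : V | p ≠ N.leaf a2 ∧ p ≠ v2} :=
        fun z hz => ⟨fun h => ha2sup (h ▸ hz), fun h => hv2sup (h ▸ hz)⟩
      obtain ⟨q, hq⟩ := lift_walk hlift p (N'.leaf ⟨x, hx⟩) (N'.leaf ⟨y, hy⟩)
        (hleafval x hx) (hleafval y hy) hSall
      have := dist_le q
      omega
  constructor
  · intro p q h1 h2
    simp only [PhyloNet.dm]
    exact le_antisymm (keyA p.1 q.1 p.2 q.2) (keyB p.1 q.1 p.2 q.2 h1 h2)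
  · intro p q hp hq
    have e1 : ((N'.leaf p : _) : V) = N.leaf a1 := by rw [hleaf' p, hp]
    have e3 : ((N'.leaf q : _) : V) = N.leaf a3 := by rw [hleaf' q, hq]
    have h1 : N'.G.Adj (N'.leaf p) V1 := hlift _ _ (by rw [e1]; exact hl1)
    have h2 : N'.G.Adj V1 V3 := (hAdj V1 V3).mpr (Or.inr (Or.inl ⟨rfl, rfl⟩))
    have h3 : N'.G.Adj V3 (N'.leaf q) := hlift _ _ (by rw [e3]; exact hl3.symm)
    have hub := dist_le (Walk.cons h1 (Walk.cons h2 (Walk.cons h3 Walk.nil)))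
    simp only [Walk.length_cons, Walk.length_nil] at hub
    have hne : N'.leaf p ≠ N'.leaf q := by
      intro h
      have := congrArg Subtype.val h
      rw [e1, e3] at this
      exact ha13 (N.leafInj this)
    have hnadj : ¬ N'.G.Adj (N'.leaf p) (N'.leaf q) := by
      intro h
      rcases adj' _ _ h with h | ⟨h1', h2'⟩ | ⟨h1', h2'⟩
      · rw [e1, e3] at h
        exact nlv1 a3 (nb1 _ h)
      · rw [e1] at h1'; exact nlv1 a1 h1'
      · rw [e1] at h1'; exact nlv3 a1 h1'
    have hcom : ∀ u, N'.G.Adj (N'.leaf p) u → ¬ N'.G.Adj u (N'.leaf q) := by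
      intro u hu hadj2
      have huV1 : u = V1 := nb1' _ u e1 hu
      subst huV1
      rcases adj' _ _ hadj2 with h | ⟨h1', h2'⟩ | ⟨h1', h2'⟩
      · rw [e3] at h
        rcases hc1 _ h with h' | h' | h'
        · exact nlw a3 h'
        · exact nlv2 a3 h'
        · exact ha13 (N.leafInj h').symm
      · rw [e3] at h2'; exact nlv3 a3 h2'
      · exact hv13 h1'
    have hlb := dist_ge_three (N'.conn.preconnected _ _) hne hnadj hcom
    simp only [PhyloNet.dm]
    omega
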